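/- Let n ≥ 3 and let B be the linear map on Hermitian n×n complex matrices defined in the context. Then for all u, v ∈ ℂⁿ with v* u = 0, one has v* B(u u*) v ≥ 0. (Consequently, B generates a one-parameter semigroup of linear maps preserving the cone of positive semidefinite complex Hermitian matrices.) -/

import Mathlib

open Matrix
open scoped ComplexOrder

/-- The exotic drift `B` on complex Hermitian `n × n` matrices: with `p = (n-2)(n²-n-1)/2` and
`q = (n-1)(n²-n-1)`, and indices taken `0`-based and cyclically, its diagonal entries are
`(B X)₀₀ = X₁₁ - X₀₀` and `(B X)_{ll} = (n-1)² (X_{l+1,l+1} - X_{ll})` for `l ≠ 0`, while its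
off-diagonal entries are `(B X)_{lm} = -p X_{lm}` if `l = 0` or `m = 0`, and
`(B X)_{lm} = -q X_{lm}` otherwise (the coefficients being real, this matches the prescription
`(B X)_{ml} = conj((B X)_{lm})` on Hermitian matrices). -/
noncomputable def BmapC (n : ℕ) [NeZero n] (X : Matrix (Fin n) (Fin n) ℂ) :
    Matrix (Fin n) (Fin n) ℂ :=
  Matrix.of fun l m =>
    if l = m then
      (if l = 0 then 1 else ((n : ℝ) - 1) ^ 2) • (X (l + 1) (l + 1) - X l l)
    else if l = 0 ∨ m = 0 then
      (-(((n : ℝ) - 2) * ((n : ℝ) ^ 2 - n - 1) / 2)) • X l m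
    else
      (-(((n : ℝ) - 1) * ((n : ℝ) ^ 2 - n - 1))) • X l m


set_option autoImplicit false
set_option maxHeartbeats 1000000

open Finset
open Fin.NatCast

namespace BmapAux

lemma list_sum_shiftsq (L : List ℝ) (v : ℝ) :
    (L.map (fun x => (x - v)^2)).sum
      = (L.map (fun x => x^2)).sum - 2*v*L.sum + L.length * v^2 := by
  induction L with
  | nil => simp
  | cons x L ih => simp [ih]; ring

lemma list_prod_lt_one (L : List ℝ) (hne : L ≠ []) (hpos : ∀ x ∈ L, 0 < x)
    (h1 : ∀ x ∈ L, x < 1) : L.prod < 1 := by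
  induction L with
  | nil => simp at hne
  | cons x L ih =>
    have hx1 : x < 1 := h1 x (by simp)
    rcases List.eq_nil_or_concat L with h | _
    · subst h; simpa using hx1
    · have hL : L ≠ [] := by rintro rfl; simp_all
      have h2 : L.prod < 1 := ih hL (fun y hy => hpos y (by simp [hy]))
        (fun y hy => h1 y (by simp [hy]))
      have hLpos : 0 < L.prod := List.prod_pos (fun y hy => hpos y (by simp [hy]))
      have : x * L.prod < 1 * L.prod := by
        exact mul_lt_mul_of_pos_right hx1 hLpos
      simp only [List.prod_cons]
      nlinarith

lemma list_one_lt_prod (L : List ℝ) (hne : L ≠ []) (h1 : ∀ x ∈ L, 1 < x) : 1 < L.prod := by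
  induction L with
  | nil => simp at hne
  | cons x L ih =>
    have hx1 : 1 < x := h1 x (by simp)
    rcases List.eq_nil_or_concat L with h | _
    · subst h; simpa using hx1
    · have hL : L ≠ [] := by rintro rfl; simp_all
      have h2 : 1 < L.prod := ih hL (fun y hy => h1 y (by simp [hy]))
      simp only [List.prod_cons]
      nlinarith

/-- Kober-type inequality: positive list with product 1. -/
lemma K3 : ∀ (k : ℕ) (L : List ℝ), L.length = k → (∀ x ∈ L, 0 < x) → L.prod = 1 →
    L.sum ^ 2 ≤ ((k:ℝ) - 1) * (L.map (fun x => x^2)).sum + k := by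
  intro k
  induction k using Nat.strong_induction_on with
  | _ k ih =>
    intro L hlen hpos hprod
    match k, hlen with
    | 0, hlen =>
      have : L = [] := List.length_eq_zero_iff.mp hlen
      subst this; norm_num
    | 1, hlen =>
      obtain ⟨x, rfl⟩ := List.length_eq_one_iff.mp hlen
      have : x = 1 := by simpa using hprod
      subst this; norm_num
    | (K+2), hlen =>
      -- extract a ≤ 1
      have hex_a : ∃ a ∈ L, a ≤ 1 := by
        by_contra hcon
        push_neg at hcon
        have : 1 < L.prod := list_one_lt_prod L (by rintro rfl; simp at hlen) hcon
        rw [hprod] at this; exact lt_irrefl _ this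
      obtain ⟨a, haL, ha1⟩ := hex_a
      have hapos : 0 < a := hpos a haL
      set L1 := L.erase a with hL1
      have hperm1 : L.Perm (a :: L1) := List.perm_cons_erase haL
      have hL1pos : ∀ x ∈ L1, 0 < x := fun x hx => hpos x (List.mem_of_mem_erase hx)
      have hL1len : L1.length = K + 1 := by
        have := hperm1.length_eq; simp at this; omega
      have hL1prod : a * L1.prod = 1 := by
        have h := hperm1.prod_eq
        rw [hprod, List.prod_cons] at h
        exact h.symm
      -- extract b ≥ 1 from L1
      have hex_b : ∃ b ∈ L1, 1 ≤ b := by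
        by_contra hcon
        push_neg at hcon
        have hne : L1 ≠ [] := by
          intro h; rw [h] at hL1len; simp at hL1len
        have h2 : L1.prod < 1 := list_prod_lt_one L1 hne hL1pos hcon
        have hLpos : 0 < L1.prod := List.prod_pos hL1pos
        nlinarith
      obtain ⟨b, hbL1, hb1⟩ := hex_b
      have hbpos : 0 < b := hL1pos b hbL1
      set L2 := L1.erase b with hL2
      have hperm2 : L1.Perm (b :: L2) := List.perm_cons_erase hbL1
      have hL2pos : ∀ x ∈ L2, 0 < x := fun x hx => hL1pos x (List.mem_of_mem_erase hx)
      have hL2len : L2.length = K := by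
        have := hperm2.length_eq; simp at this; omega
      have hL2prod : a * (b * L2.prod) = 1 := by
        have h := hperm2.prod_eq
        rw [List.prod_cons] at h
        rw [← h]
        exact hL1prod
      -- IH applied to (a*b :: L2)
      have hIH := ih (K+1) (by omega) (a*b :: L2) (by simp [hL2len])
        (by intro x hx
            rcases List.mem_cons.mp hx with h | h
            · subst h; exact mul_pos hapos hbpos
            · exact hL2pos x h)
        (by simpa [mul_assoc] using hL2prod)
      -- aggregates
      set A := L2.sum with hA
      set Q := (L2.map (fun x => x^2)).sum with hQ
      have hsumL : L.sum = a + (b + A) := by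
        rw [hperm1.sum_eq, List.sum_cons, hperm2.sum_eq, List.sum_cons]
      have hsqL : (L.map (fun x => x^2)).sum = a^2 + (b^2 + Q) := by
        rw [(hperm1.map (fun x => x^2)).sum_eq, List.map_cons, List.sum_cons,
          (hperm2.map (fun x => x^2)).sum_eq, List.map_cons, List.sum_cons]
      have hIH' : (a*b + A)^2 ≤ ((K:ℝ)+1-1) * ((a*b)^2 + Q) + (K+1) := by
        simpa [List.sum_cons, hL2len] using hIH
      -- sum of squares shift
      have hshift : (0:ℝ) ≤ Q - 2*(a+b-a*b)*A + (K:ℝ)*(a+b-a*b)^2 := by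
        have := list_sum_shiftsq L2 (a+b-a*b)
        rw [hL2len] at this
        rw [← hA, ← hQ] at this
        have hnn : (0:ℝ) ≤ (L2.map (fun x => (x - (a+b-a*b))^2)).sum := by
          apply List.sum_nonneg
          intro x hx
          simp only [List.mem_map] at hx
          obtain ⟨y, _, rfl⟩ := hx
          positivity
        linarith [this ▸ hnn]
      have hfac : (0:ℝ) ≤ (K:ℝ) * ((a*b) * ((1-a)*(b-1))) := by
        apply mul_nonneg (by positivity)
        apply mul_nonneg (by positivity)
        apply mul_nonneg (by linarith) (by linarith)
      rw [hsumL, hsqL]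
      push_cast
      nlinarith [hIH', hshift, sq_nonneg (1 - a*b), hfac]


lemma list_range_sum (N : ℕ) (f : ℕ → ℝ) :
    ((List.range N).map f).sum = ∑ i ∈ range N, f i := by
  induction N with
  | zero => simp
  | succ n ih => rw [List.range_succ, Finset.sum_range_succ, ← ih]; simp

lemma list_range_prod (N : ℕ) (f : ℕ → ℝ) :
    ((List.range N).map f).prod = ∏ i ∈ range N, f i := by
  induction N with
  | zero => simp
  | succ n ih => rw [List.range_succ, Finset.prod_range_succ, ← ih]; simp

/-- Kober's inequality over `Finset.range`, nonnegative version, with `rpow`. -/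
lemma clubs (N : ℕ) (hN : 1 ≤ N) (t : ℕ → ℝ) (ht : ∀ i, 0 ≤ t i) :
    (∑ i ∈ range N, t i)^2 ≤ ((N:ℝ) - 1) * (∑ i ∈ range N, (t i)^2)
      + N * (∏ i ∈ range N, t i) ^ ((2:ℝ)/N) := by
  by_cases hz : ∀ i ∈ range N, 0 < t i
  · -- positive case
    have hP : 0 < ∏ i ∈ range N, t i := Finset.prod_pos hz
    set P := ∏ i ∈ range N, t i with hPdef
    set g : ℝ := P ^ ((1:ℝ)/N) with hg
    have hgpos : 0 < g := Real.rpow_pos_of_pos hP _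
    have hNne : (N:ℝ) ≠ 0 := by positivity
    have hgN : g ^ N = P := by
      rw [hg, ← Real.rpow_natCast (P ^ ((1:ℝ)/N)) N, ← Real.rpow_mul hP.le]
      rw [one_div_mul_cancel hNne, Real.rpow_one]
    have hg2 : g ^ 2 = P ^ ((2:ℝ)/N) := by
      rw [hg, ← Real.rpow_natCast (P ^ ((1:ℝ)/N)) 2, ← Real.rpow_mul hP.le]
      norm_num
      rw [mul_comm]
      norm_num [div_eq_mul_inv, mul_comm]
    set L : List ℝ := (List.range N).map (fun i => t i / g) with hL
    have hlen : L.length = N := by simp [hL]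
    have hLpos : ∀ x ∈ L, 0 < x := by
      intro x hx
      simp only [hL, List.mem_map, List.mem_range] at hx
      obtain ⟨i, hi, rfl⟩ := hx
      exact div_pos (hz i (by simpa using hi)) hgpos
    have hLprod : L.prod = 1 := by
      rw [hL, list_range_prod N (fun i => t i / g)]
      rw [Finset.prod_div_distrib, Finset.prod_const, Finset.card_range, hgN]
      field_simp
      exact hPdef.symm
    have hK := K3 N L hlen hLpos hLprod
    have hLsum : L.sum = (∑ i ∈ range N, t i) / g := by
      rw [hL, list_range_sum N (fun i => t i / g), Finset.sum_div]
    have hLsq : (L.map (fun x => x^2)).sum = (∑ i ∈ range N, (t i)^2) / g^2 := by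
      rw [hL, List.map_map]
      have : ((List.range N).map ((fun x => x^2) ∘ fun i => t i / g)).sum
          = ∑ i ∈ range N, (t i)^2/g^2 := by
        rw [← list_range_sum N (fun i => (t i)^2/g^2)]
        congr 1
        apply List.map_congr_left
        intro i _
        simp [div_pow]
      rw [this, Finset.sum_div]
    rw [hLsum, hLsq] at hK
    have hg2pos : 0 < g^2 := by positivity
    rw [div_pow] at hK
    rw [div_le_iff₀ hg2pos] at hK
    calc (∑ i ∈ range N, t i)^2
        ≤ (((N:ℝ) - 1) * ((∑ i ∈ range N, (t i)^2) / g ^ 2) + ↑N) * g ^ 2 := hK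
      _ = ((N:ℝ) - 1) * (∑ i ∈ range N, (t i)^2) + N * g^2 := by
          field_simp
      _ = ((N:ℝ) - 1) * (∑ i ∈ range N, (t i)^2) + N * P ^ ((2:ℝ)/N) := by rw [hg2]
  · -- some zero
    push_neg at hz
    obtain ⟨j, hj, hj0⟩ := hz
    have hj0 : t j = 0 := le_antisymm hj0 (ht j)
    have hP : (∏ i ∈ range N, t i) = 0 := Finset.prod_eq_zero hj hj0
    rw [hP, Real.zero_rpow (by positivity), mul_zero, add_zero]
    set s := (range N).erase j with hs
    have hsum : ∑ i ∈ range N, t i = ∑ i ∈ s, t i := (Finset.sum_erase _ hj0).symm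
    have hCS : (∑ i ∈ s, 1 * t i)^2 ≤ (∑ i ∈ s, (1:ℝ)^2) * ∑ i ∈ s, (t i)^2 :=
      Finset.sum_mul_sq_le_sq_mul_sq s 1 t
    have hcard : (s.card : ℝ) = (N:ℝ) - 1 := by
      rw [hs, Finset.card_erase_of_mem hj, Finset.card_range]
      have : 1 ≤ N := hN
      push_cast [Nat.cast_sub this]
      ring
    have hsub : ∑ i ∈ s, (t i)^2 ≤ ∑ i ∈ range N, (t i)^2 := by
      apply Finset.sum_le_sum_of_subset_of_nonneg (Finset.erase_subset _ _)
      intro i _ _; positivity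
    simp only [one_mul, one_pow, Finset.sum_const, nsmul_eq_mul, mul_one] at hCS
    rw [hsum]
    calc (∑ i ∈ s, t i)^2 ≤ (s.card : ℝ) * ∑ i ∈ s, (t i)^2 := hCS
      _ ≤ ((N:ℝ) - 1) * ∑ i ∈ range N, (t i)^2 := by
          rw [hcard]
          apply mul_le_mul_of_nonneg_left hsub
          have : (1:ℝ) ≤ N := by exact_mod_cast hN
          linarith


lemma amgm_T (N : ℕ) (hN : 1 ≤ N) (t : ℕ → ℝ) (ht : ∀ i, 0 ≤ t i) :
    (N:ℝ) * (∏ i ∈ range N, t i) ^ ((1:ℝ)/N) ≤ ∑ i ∈ range N, t i := by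
  have hgm := Real.geom_mean_le_arith_mean_weighted (range N) (fun _ => 1/(N:ℝ)) t
    (fun i _ => by positivity) (by
      rw [Finset.sum_const, Finset.card_range, nsmul_eq_mul]
      field_simp) (fun i _ => ht i)
  rw [Real.finset_prod_rpow (range N) t (fun i _ => ht i)] at hgm
  have heq : ∑ i ∈ range N, 1/(N:ℝ) * t i = (∑ i ∈ range N, t i) / N := by
    rw [Finset.sum_div]
    apply Finset.sum_congr rfl
    intro i _; ring
  rw [heq] at hgm
  have hNpos : (0:ℝ) < N := by positivity
  exact (le_div_iff₀' hNpos).mp hgm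

lemma lemC (N : ℕ) (hN : 2 ≤ N) (t c : ℕ → ℝ) (ht : ∀ i, 0 ≤ t i) (hc : ∀ i, 0 ≤ c i)
    (hprod : c 0 * ∏ j ∈ range (N-1), c (j+1) = ∏ i ∈ range N, t i) :
    ((N:ℝ)+1) * (∑ i ∈ range N, t i)^2 ≤
      2 * c 0 * (∑ i ∈ range N, t i) + N * (∑ j ∈ range (N-1), (c (j+1))^2)
      + ((N:ℝ)^2-1) * (∑ i ∈ range N, (t i)^2) := by
  obtain ⟨M, rfl⟩ : ∃ M, N = M + 1 := ⟨N-1, by omega⟩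
  simp only [Nat.add_sub_cancel] at hprod ⊢
  set N := M + 1 with hNdef
  set T := ∑ i ∈ range N, t i with hT
  set P := ∏ i ∈ range N, t i with hP
  set S2 := ∑ i ∈ range N, (t i)^2 with hS2
  have hTnn : 0 ≤ T := Finset.sum_nonneg fun i _ => ht i
  have hPnn : 0 ≤ P := Finset.prod_nonneg fun i _ => ht i
  have hS2nn : 0 ≤ S2 := Finset.sum_nonneg fun i _ => by positivity
  have hcsq : 0 ≤ ∑ j ∈ range M, (c (j+1))^2 :=
    Finset.sum_nonneg fun i _ => by positivity
  have hclubs := clubs N (by omega) t ht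
  have hc0T : 0 ≤ 2 * c 0 * T := by
    have := hc 0; positivity
  have hNR : (0:ℝ) < (N:ℝ) := by positivity
  by_cases hP0 : P = 0
  · rw [← hT, ← hP, ← hS2] at hclubs
    rw [hP0, Real.zero_rpow (by positivity), mul_zero, add_zero] at hclubs
    have hmul := mul_le_mul_of_nonneg_left hclubs (by positivity : (0:ℝ) ≤ (N:ℝ)+1)
    nlinarith [hmul, hTnn, hS2nn, hcsq, hc0T]
  · have hPpos : 0 < P := lt_of_le_of_ne hPnn (Ne.symm hP0)
    -- key: (N+1) * N * P^(2/N) ≤ 2 c0 T + N Σ c²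
    set w1 : ℝ := 1/((N:ℝ)+1) with hw1
    have hw1pos : 0 < w1 := by positivity
    set z : ℕ → ℝ := fun i => if i = 0 then c 0 * T else (N:ℝ) * (c i)^2 with hz
    set w : ℕ → ℝ := fun i => if i = 0 then 2*w1 else w1 with hw
    have hznn : ∀ i, 0 ≤ z i := by
      intro i
      by_cases h : i = 0 <;> simp [hz, h]
      · exact mul_nonneg (hc 0) hTnn
      · have := hc i; positivity
    have hsumw : ∑ i ∈ range N, w i = 1 := by
      rw [Finset.sum_range_succ' (fun i => w i) M]
      have hrw : ∀ j ∈ range M, w (j+1) = w1 := by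
        intro j _; simp [hw]
      rw [Finset.sum_congr rfl hrw, Finset.sum_const, Finset.card_range, nsmul_eq_mul]
      have h0 : w 0 = 2*w1 := by simp [hw]
      rw [h0]
      have hNM : (N:ℝ) = (M:ℝ) + 1 := by rw [hNdef]; push_cast; ring
      simp only [hw1, hNM]
      have h2 : (M:ℝ) + 1 + 1 ≠ 0 := by positivity
      field_simp
      ring
    have hgm := Real.geom_mean_le_arith_mean_weighted (range N) w z
      (fun i _ => by by_cases h : i = 0 <;> simp [hw, h] <;> positivity)
      hsumw (fun i _ => hznn i)
    -- compute arithmetic side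
    have harith : ∑ i ∈ range N, w i * z i
        = w1 * (2 * c 0 * T + (N:ℝ) * ∑ j ∈ range M, (c (j+1))^2) := by
      rw [Finset.sum_range_succ' (fun i => w i * z i) M]
      have hrw : ∀ j ∈ range M, w (j+1) * z (j+1) = w1 * ((N:ℝ) * (c (j+1))^2) := by
        intro j _; simp [hw, hz]
      have h0 : w 0 * z 0 = 2*w1*(c 0 * T) := by simp [hw, hz]
      rw [Finset.sum_congr rfl hrw, h0, ← Finset.mul_sum, ← Finset.mul_sum]
      ring
    -- compute geometric side
    have hgeom : ∏ i ∈ range N, z i ^ w i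
        = ((N:ℝ) ^ (w1 * ((N:ℝ)-1))) * (T * P) ^ (2*w1) := by
      rw [Finset.prod_range_succ' (fun i => z i ^ w i) M]
      have hrw : ∀ j ∈ range M, z (j+1) ^ w (j+1)
          = ((N:ℝ) ^ w1) * ((c (j+1)) ^ (2*w1)) := by
        intro j _
        simp only [hw, hz, if_neg (Nat.succ_ne_zero j)]
        rw [Real.mul_rpow hNR.le (by positivity)]
        congr 1
        rw [← Real.rpow_natCast (c (j+1)) 2, ← Real.rpow_mul (hc (j+1))]
        norm_num
      rw [Finset.prod_congr rfl hrw, Finset.prod_mul_distrib, Finset.prod_const,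
        Finset.card_range]
      have h1 : ((N:ℝ) ^ w1) ^ (M : ℕ) = (N:ℝ) ^ (w1 * ((N:ℝ)-1)) := by
        rw [← Real.rpow_natCast ((N:ℝ) ^ w1) M, ← Real.rpow_mul hNR.le]
        congr 1
        have : (M:ℝ) = (N:ℝ) - 1 := by push_cast [hNdef]; ring
        rw [this]
      have h2 : ∏ j ∈ range M, (c (j+1)) ^ (2*w1)
          = (∏ j ∈ range M, c (j+1)) ^ (2*w1) :=
        Real.finset_prod_rpow _ _ (fun j _ => hc (j+1)) _
      have h3 : z 0 ^ w 0 = (c 0 * T) ^ (2*w1) := by simp [hw, hz]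
      rw [h1, h2, h3]
      rw [mul_assoc, ← Real.mul_rpow (Finset.prod_nonneg fun j _ => hc (j+1))
        (mul_nonneg (hc 0) hTnn)]
      congr 2
      calc (∏ j ∈ range M, c (j+1)) * (c 0 * T)
          = (c 0 * ∏ j ∈ range M, c (j+1)) * T := by ring
        _ = P * T := by rw [hprod]
        _ = T * P := by ring
    -- lower bound for the geometric side
    have hTP : (N:ℝ) * P ^ (((N:ℝ)+1)/N) ≤ T * P := by
      have h := amgm_T N (by omega) t ht
      rw [← hT, ← hP] at h
      have := mul_le_mul_of_nonneg_right h hPnn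
      have hPsplit : P ^ (((N:ℝ)+1)/N) = P ^ ((1:ℝ)/N) * P := by
        rw [show ((N:ℝ)+1)/N = (1:ℝ)/N + 1 by field_simp; ring]
        rw [Real.rpow_add hPpos, Real.rpow_one]
      calc (N:ℝ) * P ^ (((N:ℝ)+1)/N) = (N:ℝ) * P ^ ((1:ℝ)/N) * P := by
            rw [hPsplit]; ring
        _ ≤ T * P := this
    have hmono : ((N:ℝ) * P ^ (((N:ℝ)+1)/N)) ^ (2*w1) ≤ (T*P) ^ (2*w1) :=
      Real.rpow_le_rpow (by positivity) hTP (by positivity)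
    have hsimp : ((N:ℝ) * P ^ (((N:ℝ)+1)/N)) ^ (2*w1)
        = (N:ℝ)^(2*w1) * P ^ ((2:ℝ)/N) := by
      rw [Real.mul_rpow hNR.le (by positivity)]
      congr 1
      rw [← Real.rpow_mul hPpos.le]
      congr 1
      rw [hw1]
      field_simp
    -- combine
    have hNP : (N:ℝ) * P ^ ((2:ℝ)/N) ≤ ∑ i ∈ range N, w i * z i := by
      have hexp : w1*((N:ℝ)-1) + 2*w1 = 1 := by
        rw [hw1]; field_simp; ring
      calc (N:ℝ) * P ^ ((2:ℝ)/N)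
          = (N:ℝ) ^ (w1*((N:ℝ)-1)) * ((N:ℝ)^(2*w1) * P ^ ((2:ℝ)/N)) := by
            rw [← mul_assoc, ← Real.rpow_add hNR, hexp, Real.rpow_one]
        _ ≤ (N:ℝ) ^ (w1*((N:ℝ)-1)) * (T*P) ^ (2*w1) := by
            apply mul_le_mul_of_nonneg_left _ (by positivity)
            rw [← hsimp]
            exact hmono
        _ = ∏ i ∈ range N, z i ^ w i := hgeom.symm
        _ ≤ ∑ i ∈ range N, w i * z i := hgm
    rw [harith] at hNP
    have hfinal : ((N:ℝ)+1) * ((N:ℝ) * P ^ ((2:ℝ)/N))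
        ≤ 2 * c 0 * T + (N:ℝ) * ∑ j ∈ range M, (c (j+1))^2 := by
      have h := mul_le_mul_of_nonneg_left hNP (by positivity : (0:ℝ) ≤ (N:ℝ)+1)
      calc ((N:ℝ)+1) * ((N:ℝ) * P ^ ((2:ℝ)/N))
          ≤ ((N:ℝ)+1) * (w1 * (2 * c 0 * T + (N:ℝ) * ∑ j ∈ range M, (c (j+1))^2)) := h
        _ = 2 * c 0 * T + (N:ℝ) * ∑ j ∈ range M, (c (j+1))^2 := by
            rw [hw1]; field_simp
    rw [← hT, ← hP, ← hS2] at hclubs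
    have hmul := mul_le_mul_of_nonneg_left hclubs (by positivity : (0:ℝ) ≤ (N:ℝ)+1)
    nlinarith [hmul, hfinal, hS2nn]


/-- Master real inequality. -/
lemma FR (n : ℕ) (hn : 3 ≤ n) (a b : ℕ → ℝ) (ha : ∀ i, 0 ≤ a i) (hb : ∀ i, 0 ≤ b i)
    (hcyc : a n = a 0)
    (horth : a 0 * b 0 ≤ ∑ l ∈ range (n-1), a (l+1) * b (l+1)) :
    0 ≤ (a 1^2 - a 0^2) * b 0^2
      + ((n:ℝ)-1)^2 * ∑ l ∈ range (n-1), ((a (l+2))^2 - (a (l+1))^2) * (b (l+1))^2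
      + ((n:ℝ)-1)*((n:ℝ)^2-(n:ℝ)-1) * ∑ l ∈ range n, (a l)^2*(b l)^2
      - (n:ℝ)*((n:ℝ)^2-(n:ℝ)-1) * ((a 0)^2 * (b 0)^2) := by
  obtain ⟨m, rfl⟩ : ∃ m, n = m + 3 := ⟨n - 3, by omega⟩
  have hr1 : m + 3 - 1 = m + 2 := by omega
  rw [hr1] at horth ⊢
  set t : ℕ → ℝ := fun l => a (l+1) * b (l+1) with htdef
  set c : ℕ → ℝ := fun j => if j = 0 then a 1 * b (m+2) else a (j+1) * b j with hcdef
  have htnn : ∀ i, 0 ≤ t i := fun i => mul_nonneg (ha _) (hb _)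
  have hcnn : ∀ i, 0 ≤ c i := by
    intro i
    by_cases h : i = 0 <;> simp [hcdef, h] <;> exact mul_nonneg (ha _) (hb _)
  have hcsucc : ∀ j : ℕ, c (j+1) = a (j+2) * b (j+1) := by
    intro j; simp [hcdef]
  have hc0 : c 0 = a 1 * b (m+2) := by simp [hcdef]
  -- product identity
  have hprodid : c 0 * ∏ j ∈ range (m+2-1), c (j+1) = ∏ l ∈ range (m+2), t l := by
    have hr2 : m + 2 - 1 = m + 1 := by omega
    rw [hr2, hc0]
    have hc' : ∏ j ∈ range (m+1), c (j+1)
        = (∏ j ∈ range (m+1), a (j+2)) * (∏ j ∈ range (m+1), b (j+1)) := by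
      rw [← Finset.prod_mul_distrib]
      exact Finset.prod_congr rfl fun j _ => hcsucc j
    have ht' : ∏ l ∈ range (m+2), t l
        = (∏ l ∈ range (m+2), a (l+1)) * (∏ l ∈ range (m+2), b (l+1)) := by
      rw [← Finset.prod_mul_distrib]
    have hA : ∏ l ∈ range (m+2), a (l+1)
        = (∏ j ∈ range (m+1), a (j+2)) * a 1 := by
      have := Finset.prod_range_succ' (fun l => a (l+1)) (m+1)
      simpa using this
    have hB : ∏ l ∈ range (m+2), b (l+1)
        = (∏ j ∈ range (m+1), b (j+1)) * b (m+2) := by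
      have := Finset.prod_range_succ (fun l => b (l+1)) (m+1)
      simpa using this
    rw [hc', ht', hA, hB]
    ring
  have hC := lemC (m+2) (by omega) t c htnn hcnn hprodid
  -- abbreviations
  set T := ∑ l ∈ range (m+2), t l with hTdef
  set S2t := ∑ l ∈ range (m+2), (t l)^2 with hS2def
  set Sq := ∑ j ∈ range (m+2-1), (c (j+1))^2 with hSqdef
  have hr2 : m + 2 - 1 = m + 1 := by omega
  have hTnn : 0 ≤ T := Finset.sum_nonneg fun i _ => htnn i
  have hS2nn : 0 ≤ S2t := Finset.sum_nonneg fun i _ => by positivity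
  have hSqnn : 0 ≤ Sq := Finset.sum_nonneg fun i _ => by positivity
  have hτT : a 0 * b 0 ≤ T := horth
  have hτnn : 0 ≤ a 0 * b 0 := mul_nonneg (ha 0) (hb 0)
  have hc0nn : 0 ≤ c 0 := hcnn 0
  -- push casts in hC
  push_cast at hC
  -- step (i)
  have hstepi : 2 * ((m:ℝ)+2) * c 0 * (a 0 * b 0)
      ≤ (a 1)^2 * (b 0)^2 + ((m:ℝ)+2)^2 * ((a 0)^2 * (b (m+2))^2) := by
    rw [hc0]
    nlinarith [sq_nonneg (a 1 * b 0 - ((m:ℝ)+2) * (a 0 * b (m+2)))]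
  -- step (ii): key inequality
  have hKEY : ((m:ℝ)+3) * ((m:ℝ)+2) * ((a 0 * b 0))^2
      ≤ (a 1)^2 * (b 0)^2 + ((m:ℝ)+2)^2 * ((a 0)^2 * (b (m+2))^2)
        + (((m:ℝ)+2)^2 * Sq + ((m:ℝ)+3)*((m:ℝ)+1)*((m:ℝ)+2) * S2t) := by
    set K : ℝ := ((m:ℝ)+3) * ((m:ℝ)+2) with hKdef
    set C2 : ℝ := 2 * ((m:ℝ)+2) * c 0 with hC2def
    set τ : ℝ := a 0 * b 0 with hτdef
    have hKpos : 0 < K := by positivity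
    have hC2nn : 0 ≤ C2 := by positivity
    -- st3 : K * T^2 ≤ C2 * T + R
    have st3 : K * T^2 ≤ C2 * T + (((m:ℝ)+2)^2 * Sq + ((m:ℝ)+3)*((m:ℝ)+1)*((m:ℝ)+2) * S2t) := by
      nlinarith [hC, hTnn, hSqnn, hS2nn]
    rcases le_or_gt C2 (K * T) with hcase | hcase
    · have hprod1 : 0 ≤ (T - τ) * (K * (T + τ) - C2) := by
        apply mul_nonneg (by linarith)
        nlinarith [hτnn, hKpos]
      nlinarith [hstepi, st3, hprod1]
    · have h1 : K * τ ≤ K * T := by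
        apply mul_le_mul_of_nonneg_left hτT hKpos.le
      have h2 : K * τ * τ ≤ C2 * τ := by
        apply mul_le_mul_of_nonneg_right _ hτnn
        linarith
      have hR1 : 0 ≤ ((m:ℝ)+2)^2 * Sq := by positivity
      have hR2 : 0 ≤ ((m:ℝ)+3)*((m:ℝ)+1)*((m:ℝ)+2) * S2t := by positivity
      calc K * τ^2 = K * τ * τ := by ring
        _ ≤ C2 * τ := h2
        _ ≤ a 1 ^ 2 * b 0 ^ 2 + (↑m + 2) ^ 2 * (a 0 ^ 2 * b (m + 2) ^ 2) := hstepi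
        _ ≤ _ := by linarith
  -- sum identities
  have hA : ∑ l ∈ range (m+3), (a l)^2 * (b l)^2 = (a 0)^2*(b 0)^2 + S2t := by
    rw [Finset.sum_range_succ' (fun l => (a l)^2 * (b l)^2) (m+2)]
    rw [hS2def]
    have : ∑ l ∈ range (m+2), (t l)^2 = ∑ l ∈ range (m+2), (a (l+1))^2 * (b (l+1))^2 :=
      Finset.sum_congr rfl fun l _ => by rw [htdef]; ring
    rw [this]; ring
  have hB : ∑ l ∈ range (m+2), ((a (l+2))^2 - (a (l+1))^2) * (b (l+1))^2
      = Sq + (a 0)^2 * (b (m+2))^2 - S2t := by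
    have hsplit : ∑ l ∈ range (m+2), ((a (l+2))^2 - (a (l+1))^2) * (b (l+1))^2
        = ∑ l ∈ range (m+2), (a (l+2))^2 * (b (l+1))^2
          - ∑ l ∈ range (m+2), (a (l+1))^2 * (b (l+1))^2 := by
      rw [← Finset.sum_sub_distrib]
      exact Finset.sum_congr rfl fun l _ => by ring
    rw [hsplit]
    have h1 : ∑ l ∈ range (m+2), (a (l+2))^2 * (b (l+1))^2
        = Sq + (a 0)^2 * (b (m+2))^2 := by
      rw [Finset.sum_range_succ (fun l => (a (l+2))^2 * (b (l+1))^2) (m+1)]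
      have hSq' : Sq = ∑ j ∈ range (m+1), (a (j+2))^2 * (b (j+1))^2 := by
        rw [hSqdef, hr2]
        exact Finset.sum_congr rfl fun j _ => by rw [hcsucc j]; ring
      rw [hSq']
      have : a (m+1+2) = a 0 := by
        have : m+1+2 = m+3 := by omega
        rw [this, hcyc]
      rw [this]
    have h2 : ∑ l ∈ range (m+2), (a (l+1))^2 * (b (l+1))^2 = S2t := by
      rw [hS2def]
      exact (Finset.sum_congr rfl fun l _ => by rw [htdef]; ring).symm
    rw [h1, h2]
  -- final assembly
  push_cast
  rw [hA, hB]
  nlinarith [hKEY]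


end BmapAux

open BmapAux Complex

lemma sum_erase_zero {M : Type*} [AddCommMonoid M] (n : ℕ) [NeZero n] (g : Fin n → M) :
    ∑ l ∈ Finset.univ.erase (0 : Fin n), g l
      = ∑ j ∈ Finset.range (n-1), g ((j+1 : ℕ) : Fin n) := by
  have hvalpos : ∀ l : Fin n, l ≠ 0 → 1 ≤ l.val := by
    intro l hl0
    rcases Nat.eq_zero_or_pos l.val with h | h
    · exact absurd (Fin.ext h) hl0
    · exact h
  refine Finset.sum_nbij' (i := fun (l : Fin n) => l.val - 1)
    (j := fun (j : ℕ) => ((j+1 : ℕ) : Fin n)) ?_ ?_ ?_ ?_ ?_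
  · intro l hl
    have hl0 : l ≠ 0 := (Finset.mem_erase.mp hl).1
    have h1 : 1 ≤ l.val := hvalpos l hl0
    have h2 : l.val < n := l.isLt
    exact Finset.mem_range.mpr (by omega)
  · intro j hj
    have hj' : j < n - 1 := Finset.mem_range.mp hj
    have hjn : j + 1 < n := by omega
    refine Finset.mem_erase.mpr ⟨?_, Finset.mem_univ _⟩
    intro h0
    have h0' : ((j+1 : ℕ) : Fin n).val = 0 := by rw [h0]; rfl
    rw [Fin.val_natCast, Nat.mod_eq_of_lt hjn] at h0'
    omega
  · intro l hl
    have hl0 : l ≠ 0 := (Finset.mem_erase.mp hl).1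
    have h1 : 1 ≤ l.val := hvalpos l hl0
    have h2 : l.val - 1 + 1 = l.val := by omega
    rw [h2, Fin.cast_val_eq_self]
  · intro j hj
    have hj' : j < n - 1 := Finset.mem_range.mp hj
    have hjn : j + 1 < n := by omega
    rw [Fin.val_natCast, Nat.mod_eq_of_lt hjn]
    omega
  · intro l hl
    have hl0 : l ≠ 0 := (Finset.mem_erase.mp hl).1
    have h1 : 1 ≤ l.val := hvalpos l hl0
    have h2 : l.val - 1 + 1 = l.val := by omega
    rw [h2, Fin.cast_val_eq_self]


/-- **Cross-positivity of the exotic drift `B`, complex case.**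
For `n ≥ 3` and all `u, v ∈ ℂⁿ` with `v* u = 0` one has `v* B(u u*) v ≥ 0`; consequently `B`
generates a one-parameter semigroup of linear maps preserving the cone of positive semidefinite
complex Hermitian matrices. -/
theorem BmapC_cross_positive (n : ℕ) [NeZero n] (hn : 3 ≤ n) (u v : Fin n → ℂ)
    (horth : star v ⬝ᵥ u = 0) :
    0 ≤ star v ⬝ᵥ (BmapC n (vecMulVec u (star u)) *ᵥ v) := by
  classical
  set q : ℝ := ((n:ℝ) - 1) * ((n:ℝ)^2 - (n:ℝ) - 1) with hq
  set p : ℝ := ((n:ℝ) - 2) * ((n:ℝ)^2 - (n:ℝ) - 1) / 2 with hp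
  set rr : ℝ := q - p with hrr
  set X := vecMulVec u (star u) with hX
  set w : Fin n → ℂ := fun l => (starRingEnd ℂ) (v l) * u l with hw
  have hW : ∑ l, w l = 0 := by
    have h : ∑ l, w l = star v ⬝ᵥ u := by
      simp [dotProduct, hw, Pi.star_apply, Complex.star_def]
    rw [h, horth]
  have hWc : ∑ l, (starRingEnd ℂ) (w l) = 0 := by
    rw [← map_sum, hW, map_zero]
  set G : Fin n → Fin n → ℂ := fun l m => w l * (starRingEnd ℂ) (w m) with hG
  set dcoef : Fin n → ℝ := fun l => if l = 0 then 1 else ((n:ℝ)-1)^2 with hd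
  set Hd : Fin n → ℂ := fun l =>
    ((dcoef l : ℝ) : ℂ) * (X (l+1) (l+1) - X l l) * (v l * (starRingEnd ℂ) (v l))
    + (q:ℂ) * G l l with hHd
  have hXlm : ∀ l' m' : Fin n, X l' m' = u l' * (starRingEnd ℂ) (u m') := by
    intro l' m'; simp [hX, vecMulVec_apply, Pi.star_apply, Complex.star_def]
  have hGlm : ∀ l m : Fin n,
      G l m = ((starRingEnd ℂ) (v l) * u l) * (v m * (starRingEnd ℂ) (u m)) := by
    intro l m; simp only [hG, hw, _root_.map_mul, Complex.conj_conj]; try ring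
  -- entrywise identity
  have hentry : ∀ l m : Fin n,
      (starRingEnd ℂ) (v l) * (BmapC n X l m * v m)
        = (-(q:ℂ)) * G l m
          + (if m = l then Hd l else 0)
          + (if l = 0 then (if m = 0 then 0 else (rr:ℂ) * G l m) else 0)
          + (if m = 0 then (if l = 0 then 0 else (rr:ℂ) * G l m) else 0) := by
    intro l m
    by_cases hlm : l = m
    · subst hlm
      have hB : BmapC n X l l
          = ((dcoef l : ℝ) : ℂ) * (X (l+1) (l+1) - X l l) := by
        simp only [BmapC, Matrix.of_apply, if_pos rfl, hd]
        by_cases h0 : l = 0 <;> simp [h0, Complex.real_smul]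
      rw [hB]
      by_cases h0 : l = 0 <;>
        · simp only [hHd, if_pos rfl, h0, if_neg (by simp : ¬(0:Fin n) ≠ 0)]
          simp [h0]
          try ring
    · have hml : ¬ (m = l) := fun h => hlm h.symm
      by_cases hl0 : l = 0
      · have hm0 : ¬ (m = 0) := by rw [hl0] at hlm; exact fun h => hlm h.symm
        have hB : BmapC n X l m = ((-p : ℝ) : ℂ) * X l m := by
          simp only [BmapC, Matrix.of_apply, if_neg hlm, if_pos (Or.inl hl0),
            Complex.real_smul, hp]
          try (push_cast; ring)
        rw [hB, hXlm l m, hGlm l m]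
        simp only [if_pos hl0, if_neg hm0, if_neg hml, hrr]
        try (push_cast; ring)
      · by_cases hm0 : m = 0
        · have hB : BmapC n X l m = ((-p : ℝ) : ℂ) * X l m := by
            simp only [BmapC, Matrix.of_apply, if_neg hlm, if_pos (Or.inr hm0),
              Complex.real_smul, hp]
            try (push_cast; ring)
          rw [hB, hXlm l m, hGlm l m]
          simp only [if_neg hl0, if_pos hm0, if_neg hml]
          rw [hrr]
          try (push_cast; ring)
        · have hB : BmapC n X l m = ((-q : ℝ) : ℂ) * X l m := by
            have : ¬ (l = 0 ∨ m = 0) := by tauto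
            simp only [BmapC, Matrix.of_apply, if_neg hlm, if_neg this,
              Complex.real_smul, hq]
            try (push_cast; ring)
          rw [hB, hXlm l m, hGlm l m]
          simp only [if_neg hl0, if_neg hm0, if_neg hml]
          try (push_cast; ring)
  -- the goal as a double sum
  have hgoal : star v ⬝ᵥ (BmapC n X *ᵥ v)
      = ∑ l, ∑ m, (starRingEnd ℂ) (v l) * (BmapC n X l m * v m) := by
    simp [dotProduct, mulVec, Finset.mul_sum, Pi.star_apply, Complex.star_def]
  -- compute the four pieces
  have keyR : ∀ (z : ℂ), ∑ m : Fin n, z * (starRingEnd ℂ) (w m) = 0 := by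
    intro z; rw [← Finset.mul_sum, hWc, mul_zero]
  have keyL : ∀ (z : ℂ), ∑ l : Fin n, w l * z = 0 := by
    intro z; rw [← Finset.sum_mul, hW, zero_mul]
  have h1 : ∑ l : Fin n, ∑ m : Fin n, (-(q:ℂ)) * G l m = 0 := by
    have h : ∀ l : Fin n, ∑ m : Fin n, (-(q:ℂ)) * G l m = 0 := by
      intro l
      rw [← keyR ((-(q:ℂ)) * w l)]
      exact Finset.sum_congr rfl fun m _ => by simp only [hG]; ring
    rw [Finset.sum_congr rfl fun l _ => h l]
    simp
  have h2 : ∑ l : Fin n, ∑ m : Fin n, (if m = l then Hd l else 0) = ∑ l, Hd l := by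
    apply Finset.sum_congr rfl
    intro l _
    simp [Finset.sum_ite_eq' univ l (fun _ => Hd l)]
  have hG0sum : ∑ m : Fin n, (rr:ℂ) * G 0 m = 0 := by
    rw [← keyR ((rr:ℂ) * w 0)]
    exact Finset.sum_congr rfl fun m _ => by simp only [hG]; ring
  have hGsum0 : ∑ l : Fin n, (rr:ℂ) * G l 0 = 0 := by
    rw [← keyL ((rr:ℂ) * (starRingEnd ℂ) (w 0))]
    exact Finset.sum_congr rfl fun l _ => by simp only [hG]; ring
  have h3 : ∑ l : Fin n, ∑ m : Fin n,
      (if l = 0 then (if m = 0 then 0 else (rr:ℂ) * G l m) else 0)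
      = -((rr:ℂ) * G 0 0) := by
    have houter : ∀ l : Fin n, ∑ m : Fin n,
        (if l = 0 then (if m = 0 then 0 else (rr:ℂ) * G l m) else 0)
        = (if l = 0 then ∑ m : Fin n, (if m = 0 then 0 else (rr:ℂ) * G l m) else 0) := by
      intro l
      by_cases h0 : l = 0 <;> simp [h0]
    rw [Finset.sum_congr rfl (fun l _ => houter l)]
    rw [Finset.sum_ite_eq' univ (0 : Fin n)
      (fun l => ∑ m : Fin n, (if m = 0 then 0 else (rr:ℂ) * G l m))]
    simp only [Finset.mem_univ, if_pos]
    have hin : ∀ m : Fin n, (if m = 0 then 0 else (rr:ℂ) * G 0 m)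
        = (rr:ℂ) * G 0 m - (if m = 0 then (rr:ℂ) * G 0 m else 0) := by
      intro m; by_cases h : m = 0 <;> simp [h]
    rw [Finset.sum_congr rfl (fun m _ => hin m), Finset.sum_sub_distrib, hG0sum]
    rw [Finset.sum_ite_eq' univ (0 : Fin n) (fun m => (rr:ℂ) * G 0 m)]
    simp
  have h4 : ∑ l : Fin n, ∑ m : Fin n,
      (if m = 0 then (if l = 0 then 0 else (rr:ℂ) * G l m) else 0)
      = -((rr:ℂ) * G 0 0) := by
    have hinner : ∀ l : Fin n, ∑ m : Fin n,
        (if m = 0 then (if l = 0 then 0 else (rr:ℂ) * G l m) else 0)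
        = (if l = 0 then 0 else (rr:ℂ) * G l 0) := by
      intro l
      rw [Finset.sum_ite_eq' univ (0 : Fin n)
        (fun m => if l = 0 then 0 else (rr:ℂ) * G l m)]
      simp
    rw [Finset.sum_congr rfl (fun l _ => hinner l)]
    have hin : ∀ l : Fin n, (if l = 0 then 0 else (rr:ℂ) * G l 0)
        = (rr:ℂ) * G l 0 - (if l = 0 then (rr:ℂ) * G l 0 else 0) := by
      intro l; by_cases h : l = 0 <;> simp [h]
    rw [Finset.sum_congr rfl (fun l _ => hin l), Finset.sum_sub_distrib, hGsum0]
    rw [Finset.sum_ite_eq' univ (0 : Fin n) (fun l => (rr:ℂ) * G l 0)]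
    simp
  -- assemble
  have hD : star v ⬝ᵥ (BmapC n X *ᵥ v)
      = (∑ l, Hd l) - 2 * ((rr:ℂ) * G 0 0) := by
    rw [hgoal]
    rw [Finset.sum_congr rfl (fun l _ =>
      Finset.sum_congr rfl (fun m _ => hentry l m))]
    simp only [Finset.sum_add_distrib]
    rw [h1, h2, h3, h4]
    ring
  -- real forms
  set nsU : Fin n → ℝ := fun l => Complex.normSq (u l) with hnsU
  set nsV : Fin n → ℝ := fun l => Complex.normSq (v l) with hnsV
  have hGdiag : ∀ l : Fin n, G l l = ((nsV l * nsU l : ℝ) : ℂ) := by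
    intro l
    simp only [hG]
    rw [Complex.mul_conj]
    norm_cast
    simp [hw, Complex.normSq_mul, Complex.normSq_conj, hnsU, hnsV]
  have hHdreal : ∀ l : Fin n, Hd l
      = ((dcoef l * (nsU (l+1) - nsU l) * nsV l + q * (nsV l * nsU l) : ℝ) : ℂ) := by
    intro l
    have h1 : X (l+1) (l+1) = ((nsU (l+1) : ℝ) : ℂ) := by
      rw [hXlm]; exact Complex.mul_conj _
    have h2 : X l l = ((nsU l : ℝ) : ℂ) := by rw [hXlm]; exact Complex.mul_conj _
    have h3 : v l * (starRingEnd ℂ) (v l) = ((nsV l : ℝ) : ℂ) := Complex.mul_conj _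
    simp only [hHd]
    rw [h1, h2, h3, hGdiag l]
    push_cast
    ring
  set S : ℝ := (∑ l : Fin n, (dcoef l * (nsU (l+1) - nsU l) * nsV l + q * (nsV l * nsU l)))
      - 2 * (rr * (nsV 0 * nsU 0)) with hS
  have hDS : star v ⬝ᵥ (BmapC n X *ᵥ v) = (S : ℂ) := by
    rw [hD]
    rw [Finset.sum_congr rfl fun l _ => hHdreal l, hGdiag 0]
    rw [hS]
    push_cast
    ring
  rw [hDS, Complex.zero_le_real]
  -- pass to moduli
  set aa : ℕ → ℝ := fun i => ‖u ((i : ℕ) : Fin n)‖ with haa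
  set bb : ℕ → ℝ := fun i => ‖v ((i : ℕ) : Fin n)‖ with hbb
  have haann : ∀ i, 0 ≤ aa i := fun i => norm_nonneg _
  have hbbnn : ∀ i, 0 ≤ bb i := fun i => norm_nonneg _
  have hcycA : aa n = aa 0 := by simp [haa]
  have hnsUa : ∀ l : Fin n, nsU l = aa l.val ^ 2 := by
    intro l
    rw [hnsU, haa]
    simp only [Fin.cast_val_eq_self]
    rw [Complex.sq_norm]
  have hnsVa : ∀ l : Fin n, nsV l = bb l.val ^ 2 := by
    intro l
    rw [hnsV, hbb]
    simp only [Fin.cast_val_eq_self]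
    rw [Complex.sq_norm]
  have hcastsucc : ∀ l : Fin n, ((l.val + 1 : ℕ) : Fin n) = l + 1 := by
    intro l
    push_cast
    simp [Fin.cast_val_eq_self]
  have hnsUsucc : ∀ l : Fin n, nsU (l+1) = aa (l.val + 1) ^ 2 := by
    intro l
    rw [hnsU, haa]
    simp only [hcastsucc l]
    rw [Complex.sq_norm]
  -- orthogonality bound
  have habsw : ∀ l : Fin n, ‖w l‖ = bb l.val * aa l.val := by
    intro l
    rw [hw, haa, hbb]
    simp only [Fin.cast_val_eq_self]
    simp [_root_.map_mul, Complex.norm_conj]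
  have horthR : aa 0 * bb 0 ≤ ∑ l ∈ range (n-1), aa (l+1) * bb (l+1) := by
    have hw0 : w 0 + ∑ l ∈ Finset.univ.erase (0 : Fin n), w l = 0 := by
      rw [Finset.add_sum_erase Finset.univ w (Finset.mem_univ (0 : Fin n))]
      exact hW
    have hw0' : w 0 = -∑ l ∈ Finset.univ.erase (0 : Fin n), w l := by linear_combination hw0
    have habs : ‖w 0‖ ≤ ∑ l ∈ Finset.univ.erase (0 : Fin n), ‖w l‖ := by
      rw [hw0', norm_neg]
      calc ‖∑ l ∈ Finset.univ.erase (0 : Fin n), w l‖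
          = ‖∑ l ∈ Finset.univ.erase (0 : Fin n), w l‖ := rfl
        _ ≤ ∑ l ∈ Finset.univ.erase (0 : Fin n), ‖w l‖ := norm_sum_le _ _
        _ = ∑ l ∈ Finset.univ.erase (0 : Fin n), ‖w l‖ := by
            exact Finset.sum_congr rfl fun l _ => rfl
    have hre : ∑ l ∈ Finset.univ.erase (0 : Fin n), ‖w l‖
        = ∑ j ∈ range (n-1), aa (j+1) * bb (j+1) := by
      rw [sum_erase_zero n (fun l => ‖w l‖)]
      apply Finset.sum_congr rfl
      intro j hj
      have hjn : j + 1 < n := by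
        have := Finset.mem_range.mp hj; omega
      rw [habsw]
      rw [Fin.val_natCast, Nat.mod_eq_of_lt hjn]
      ring
    have h0 : ‖w 0‖ = aa 0 * bb 0 := by
      rw [habsw]
      simp [mul_comm]
    rw [← hre, ← h0]
    exact habs
  have hFR := FR n hn aa bb haann hbbnn hcycA horthR
  -- identify S with the FR expression
  set F : ℕ → ℝ := fun i => (if i = 0 then (1:ℝ) else ((n:ℝ)-1)^2) * (aa (i+1)^2 - aa i^2) * bb i^2
      + q * (bb i ^2 * aa i^2) with hF
  have hsum1 : ∑ l : Fin n, (dcoef l * (nsU (l+1) - nsU l) * nsV l + q * (nsV l * nsU l))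
      = ∑ i ∈ range n, F i := by
    rw [← Fin.sum_univ_eq_sum_range F n]
    apply Finset.sum_congr rfl
    intro l _
    rw [hnsUa l, hnsVa l, hnsUsucc l]
    simp only [hF, hd]
    by_cases h0 : l = 0
    · have : l.val = 0 := by rw [h0]; rfl
      simp [h0, this]
    · have : l.val ≠ 0 := by
        intro h; exact h0 (Fin.ext h)
      simp [h0, this]
  have hsplitn : ∑ i ∈ range n, F i = F 0 + ∑ j ∈ range (n-1), F (j+1) := by
    obtain ⟨k, hk⟩ : ∃ k, n = k + 1 := ⟨n-1, by omega⟩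
    rw [hk]
    simp only [Nat.add_sub_cancel]
    rw [Finset.sum_range_succ' F k]
    ring
  have hsplitsum : ∑ j ∈ range (n-1), F (j+1)
      = ((n:ℝ)-1)^2 * ∑ j ∈ range (n-1), ((aa (j+2))^2 - (aa (j+1))^2) * (bb (j+1))^2
        + q * ∑ j ∈ range (n-1), (aa (j+1))^2 * (bb (j+1))^2 := by
    rw [Finset.mul_sum, Finset.mul_sum, ← Finset.sum_add_distrib]
    apply Finset.sum_congr rfl
    intro j _
    simp only [hF, if_neg (Nat.succ_ne_zero j)]
    ring
  have hsplitE3 : ∑ l ∈ range n, (aa l)^2 * (bb l)^2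
      = (aa 0)^2 * (bb 0)^2 + ∑ j ∈ range (n-1), (aa (j+1))^2 * (bb (j+1))^2 := by
    obtain ⟨k, hk⟩ : ∃ k, n = k + 1 := ⟨n-1, by omega⟩
    rw [hk]
    simp only [Nat.add_sub_cancel]
    rw [Finset.sum_range_succ' (fun l => (aa l)^2 * (bb l)^2) k]
    ring
  have hn2rr : (n:ℝ)*((n:ℝ)^2-(n:ℝ)-1) = 2*rr := by
    rw [hrr, hq, hp]; ring
  rw [← hq, hn2rr, hsplitE3] at hFR
  have hF0 : F 0 = (aa 1 ^2 - aa 0^2) * bb 0^2 + q * (bb 0^2 * aa 0^2) := by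
    simp [hF]
  rw [hS, hsum1, hsplitn, hsplitsum, hF0]
  rw [hnsVa 0, hnsUa 0]
  have hv0 : ((0:Fin n)).val = 0 := rfl
  rw [hv0]
  nlinarith [hFR]
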